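/- Let r, c > 0, λ̄ > λ̲ > 0 with α₁(λ̲)λ̲ ≥ λ̲ and c ≤ (1 − α₁(λ̲))λ̄ + α₁(λ̲)λ̲. Define f(b) = (1 − α₁(λ̄))c + b·(α₁(λ̄)λ̄ − α₁(λ̲)(λ̄ − λ̲) − c) for b ∈ (0,1), where α₁(λ) = 1/2 + (1/2)√(8r/λ² + 1). Then f is nondecreasing in b and f(c/λ̄) ≥ 0. -/
import Mathlib


noncomputable def alpha1 (r lam : ℝ) : ℝ := 1/2 + Real.sqrt (8*r/lam^2 + 1) / 2

theorem stmt16 (r c l L : ℝ)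
    (hr : 0 < r) (hc : 0 < c) (hl : 0 < l) (hlL : l < L)
    (h1 : l ≤ alpha1 r l * l)
    (h2 : c ≤ (1 - alpha1 r l) * L + alpha1 r l * l) :
    (∀ b ∈ Set.Ioo (0:ℝ) 1, ∀ b' ∈ Set.Ioo (0:ℝ) 1, b ≤ b' →
      (1 - alpha1 r L)*c + b*(alpha1 r L * L - alpha1 r l * (L - l) - c)
        ≤ (1 - alpha1 r L)*c + b'*(alpha1 r L * L - alpha1 r l * (L - l) - c)) ∧
    0 ≤ (1 - alpha1 r L)*c + (c/L)*(alpha1 r L * L - alpha1 r l * (L - l) - c) := by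
  have hL : (0:ℝ) < L := hl.trans hlL
  have hA : 1 ≤ alpha1 r L := by
    have h0 : (1:ℝ) ≤ 8*r/L^2 + 1 := by nlinarith [sq_nonneg L, div_nonneg (by linarith : (0:ℝ) ≤ 8*r) (sq_nonneg L)]
    have := Real.sqrt_le_sqrt h0
    rw [Real.sqrt_one] at this
    unfold alpha1; linarith
  have h2' : 0 ≤ L - alpha1 r l * (L - l) - c := by nlinarith [h2]
  have hK : 0 ≤ alpha1 r L * L - alpha1 r l * (L - l) - c := by nlinarith
  constructor
  · intro b hb b' hb' hbb
    nlinarith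
  · have heq : (1 - alpha1 r L)*c + (c/L)*(alpha1 r L * L - alpha1 r l * (L - l) - c)
        = (c/L) * (L - alpha1 r l * (L - l) - c) := by
      field_simp; ring
    rw [heq]
    exact mul_nonneg (div_nonneg hc.le hL.le) h2'
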